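/- Suppose each project valuation v_k is monotone with v_k(∅)=0. Let S be an allocation and p a payment vector satisfying: (i) weak no-overbidding, i.e., Σ_{i∈S_k} p_i ≤ v_k(S_k) for every project k; and (ii) the Nash-deviation property, i.e., for every project k and every set T ⊆ 𝒩 ∖ S_k, v_k(S_k ∪ T) − Σ_{i∈T} p_i ≤ v_k(S_k). Then there exists a payment vector p̄ with p̄_i ≥ p_i for all i such that Σ_{i∈S_k} p̄_i = v_k(S_k) for every project k and (S, p̄) is core stable. -/

import Mathlib

/-- From a weakly no-overbidding payment vector satisfying the Nash-deviation property,
one can raise the payments so that each project's payments sum exactly to its value and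
the resulting solution is core stable. -/
theorem stmt13 {𝒩 P : Type*} [Fintype 𝒩] [DecidableEq 𝒩] [Fintype P]
    (v : P → Finset 𝒩 → ℝ)
    (hzero : ∀ k, v k ∅ = 0)
    (hnonneg : ∀ k (T : Finset 𝒩), 0 ≤ v k T)
    (hmono : ∀ k (A B : Finset 𝒩), A ⊆ B → v k A ≤ v k B)
    -- S is an allocation
    (S : P → Finset 𝒩)
    (hdisj : ∀ k l, k ≠ l → Disjoint (S k) (S l))
    (hcover : Finset.univ.biUnion S = Finset.univ)
    -- p is a payment vector
    (p : 𝒩 → ℝ) (hp : ∀ i, 0 ≤ p i)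
    -- (i) weak no-overbidding
    (hwnob : ∀ k, ∑ i ∈ S k, p i ≤ v k (S k))
    -- (ii) Nash-deviation property
    (hnash : ∀ k (T : Finset 𝒩), T ⊆ Finset.univ \ S k →
      v k (S k ∪ T) - ∑ i ∈ T, p i ≤ v k (S k)) :
    ∃ pbar : 𝒩 → ℝ,
      (∀ i, p i ≤ pbar i) ∧
      (∀ i, 0 ≤ pbar i) ∧
      -- payments on each project sum exactly to its value
      (∀ k, ∑ i ∈ S k, pbar i = v k (S k)) ∧
      -- stability
      (∀ k (T : Finset 𝒩), v k (S k ∪ T) ≤ ∑ i ∈ S k ∪ T, pbar i) ∧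
      -- budget balance
      (∑ i, pbar i = ∑ k, v k (S k)) := by
  classical
  -- each agent belongs to some project
  have hmem : ∀ i : 𝒩, ∃ k, i ∈ S k := by
    intro i
    have : i ∈ Finset.univ.biUnion S := by rw [hcover]; exact Finset.mem_univ i
    obtain ⟨k, -, hk⟩ := Finset.mem_biUnion.mp this
    exact ⟨k, hk⟩
  set K : 𝒩 → P := fun i => (hmem i).choose with hK
  have hKmem : ∀ i, i ∈ S (K i) := fun i => (hmem i).choose_spec
  have hKuniq : ∀ i k, i ∈ S k → K i = k := by
    intro i k hik
    by_contra h
    exact (Finset.disjoint_left.mp (hdisj _ _ h) (hKmem i)) hik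
  -- deficit per project
  set d : P → ℝ := fun k => (v k (S k) - ∑ i ∈ S k, p i) / (S k).card with hd
  have hdnonneg : ∀ k, 0 ≤ d k := by
    intro k
    apply div_nonneg (by linarith [hwnob k]) (by positivity)
  set pbar : 𝒩 → ℝ := fun i => p i + d (K i) with hpbar
  have hge : ∀ i, p i ≤ pbar i := fun i => by
    simp only [hpbar]; linarith [hdnonneg (K i)]
  have hsum : ∀ k, ∑ i ∈ S k, pbar i = v k (S k) := by
    intro k
    rcases (S k).eq_empty_or_nonempty with he | hne
    · simp [he, hzero k]
    · have hcongr : ∑ i ∈ S k, pbar i = ∑ i ∈ S k, (p i + d k) := by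
        apply Finset.sum_congr rfl
        intro i hi
        simp [hpbar, hKuniq i k hi]
      rw [hcongr, Finset.sum_add_distrib, Finset.sum_const, nsmul_eq_mul]
      have hcard : ((S k).card : ℝ) ≠ 0 := by
        exact_mod_cast Finset.card_ne_zero_of_mem hne.choose_spec
      rw [hd]
      field_simp
      ring
  refine ⟨pbar, hge, fun i => le_trans (hp i) (hge i), hsum, ?_, ?_⟩
  · intro k T
    have hTsub : T \ S k ⊆ Finset.univ \ S k := by
      intro x hx
      simp only [Finset.mem_sdiff] at hx ⊢
      exact ⟨Finset.mem_univ x, hx.2⟩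
    have hU : S k ∪ T = S k ∪ (T \ S k) := by
      ext x; simp [Finset.mem_union, Finset.mem_sdiff]
    have h1 := hnash k (T \ S k) hTsub
    have h2 : ∑ i ∈ T \ S k, p i ≤ ∑ i ∈ T \ S k, pbar i :=
      Finset.sum_le_sum fun i _ => hge i
    have hdisjU : Disjoint (S k) (T \ S k) := Finset.disjoint_sdiff
    have h3 : ∑ i ∈ S k ∪ (T \ S k), pbar i
        = ∑ i ∈ S k, pbar i + ∑ i ∈ T \ S k, pbar i :=
      Finset.sum_union hdisjU
    rw [hU, h3, hsum k]
    linarith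
  · have hpd : ((Finset.univ : Finset P) : Set P).PairwiseDisjoint S := by
      intro a _ b _ hab
      exact hdisj a b hab
    calc ∑ i, pbar i = ∑ i ∈ Finset.univ.biUnion S, pbar i := by rw [hcover]
      _ = ∑ k, ∑ i ∈ S k, pbar i := Finset.sum_biUnion hpd
      _ = ∑ k, v k (S k) := by simp [hsum]
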